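/- arXiv:2003.10056 — 3 statements merged into one kernel-verified Lean document; each statement's English description precedes it below -/
import Mathlib

section
/- Let d ≥ 1, α ∈ (-1, 0), and θ(x) = |x|^α on ℝ^d \ {0}. Let q : ℝ^d → ℝ^d be continuous. Then for every x ≠ 0, Δ_∞θ(x) + (q(x)·∇θ(x)) |∇θ(x)|² = α³ |x|^{3α−4} (α − 1 + q(x)·x). In particular, if (q(x)·x)₊ < 1 at x, then this expression is strictly positive. -/
open scoped RealInnerProductSpace
open Real Filter

variable {F : Type*} [NormedAddCommGroup F] [InnerProductSpace ℝ F]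

lemma myHasFDerivAt_norm_rpow (p : ℝ) {x : F} (hx : x ≠ 0) :
    HasFDerivAt (fun y : F => ‖y‖ ^ p) ((p * ‖x‖ ^ (p - 2)) • (innerSL ℝ x)) x := by
  have hx2 : (0:ℝ) < ‖x‖ := norm_pos_iff.mpr hx
  have h2 : HasFDerivAt (fun y : F => (‖y‖ ^ 2 : ℝ)) (2 • innerSL ℝ x) x :=
    (hasStrictFDerivAt_norm_sq x).hasFDerivAt
  have hr : HasDerivAt (fun t : ℝ => t ^ (p/2)) (p/2 * (‖x‖^2) ^ (p/2 - 1)) (‖x‖^2) :=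
    Real.hasDerivAt_rpow_const (Or.inl (by positivity))
  have h := hr.comp_hasFDerivAt x h2
  have heq : ((fun t : ℝ => t ^ (p/2)) ∘ fun y : F => (‖y‖ ^ 2 : ℝ)) = fun y : F => ‖y‖ ^ p := by
    funext y
    simp only [Function.comp]
    rw [← Real.rpow_natCast ‖y‖ 2, ← Real.rpow_mul (norm_nonneg y)]
    congr 1
    push_cast
    ring
  rw [heq] at h
  refine h.congr_fderiv ?_
  ext w
  have hpow : ((‖x‖^2 : ℝ)) ^ (p/2 - 1) = ‖x‖ ^ (p - 2) := by
    rw [← Real.rpow_natCast ‖x‖ 2, ← Real.rpow_mul (norm_nonneg x)]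
    congr 1
    push_cast
    ring
  simp [hpow]
  ring

lemma myHasGradientAt (p : ℝ) {x : F} [CompleteSpace F] (hx : x ≠ 0) :
    HasGradientAt (fun y : F => ‖y‖ ^ p) ((p * ‖x‖ ^ (p - 2)) • x) x := by
  rw [hasGradientAt_iff_hasFDerivAt]
  refine (myHasFDerivAt_norm_rpow p hx).congr_fderiv ?_
  symm
  ext w
  simp [InnerProductSpace.toDual_apply_apply, inner_smul_left]

lemma myHasFDerivAt_G (p : ℝ) {x : F} (hx : x ≠ 0) :
    HasFDerivAt (fun y : F => (p * ‖y‖ ^ (p - 2)) • y)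
      ((p * ‖x‖ ^ (p - 2)) • ContinuousLinearMap.id ℝ F
        + (((p - 2) * (p * ‖x‖ ^ (p - 4))) • innerSL ℝ x).smulRight x) x := by
  have hc : HasFDerivAt (fun y : F => (p * ‖y‖ ^ (p - 2)))
      (p • (((p-2) * ‖x‖ ^ (p - 2 - 2)) • innerSL ℝ x)) x :=
    (myHasFDerivAt_norm_rpow (p - 2) hx).const_mul p
  have := hc.smul (hasFDerivAt_id x)
  refine this.congr_fderiv ?_
  congr 1
  · ext w
    simp only [ContinuousLinearMap.smulRight_apply, ContinuousLinearMap.smul_apply,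
      innerSL_apply_apply]
    rw [show p - 2 - 2 = p - 4 by ring, smul_smul]
    congr 1
    ring

noncomputable def infLap {d : ℕ} (f : EuclideanSpace ℝ (Fin d) → ℝ)
    (x : EuclideanSpace ℝ (Fin d)) : ℝ :=
  ⟪gradient f x, fderiv ℝ (gradient f) x (gradient f x)⟫

noncomputable def infLapG {d : ℕ} (γ : ℝ) (f : EuclideanSpace ℝ (Fin d) → ℝ)
    (x : EuclideanSpace ℝ (Fin d)) : ℝ :=
  ‖gradient f x‖ ^ (-γ) * infLap f x

theorem stmt1 (d : ℕ) (hd : 1 ≤ d) (α : ℝ) (hα : α ∈ Set.Ioo (-1 : ℝ) 0)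
    (q : EuclideanSpace ℝ (Fin d) → EuclideanSpace ℝ (Fin d)) (hq : Continuous q)
    (θ : EuclideanSpace ℝ (Fin d) → ℝ) (hθ : ∀ x, θ x = ‖x‖ ^ α) :
    ∀ x : EuclideanSpace ℝ (Fin d), x ≠ 0 →
      (infLap θ x + ⟪q x, gradient θ x⟫ * ‖gradient θ x‖ ^ (2 : ℕ)
        = α ^ (3 : ℕ) * ‖x‖ ^ (3 * α - 4) * (α - 1 + ⟪q x, x⟫))
      ∧ (max (⟪q x, x⟫) 0 < 1 →
          0 < α ^ (3 : ℕ) * ‖x‖ ^ (3 * α - 4) * (α - 1 + ⟪q x, x⟫)) := by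
  intro x hx
  have hr : (0:ℝ) < ‖x‖ := norm_pos_iff.mpr hx
  have hα0 : α < 0 := hα.2
  constructor
  · -- main identity
    have hθf : θ = fun y => ‖y‖ ^ α := funext hθ
    set G : EuclideanSpace ℝ (Fin d) → EuclideanSpace ℝ (Fin d) := fun y => (α * ‖y‖ ^ (α - 2)) • y with hGdef
    have hgrad : ∀ y : EuclideanSpace ℝ (Fin d), y ≠ 0 → gradient θ y = G y := by
      intro y hy
      rw [hθf]
      exact (myHasGradientAt α hy).gradient
    have hgx : gradient θ x = G x := hgrad x hx
    have hev : gradient θ =ᶠ[nhds x] G := by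
      filter_upwards [IsOpen.mem_nhds isOpen_compl_singleton hx] with y hy
      exact hgrad y hy
    have hfd : fderiv ℝ (gradient θ) x = fderiv ℝ G x := hev.fderiv_eq
    have hfdG := (myHasFDerivAt_G α hx).fderiv
    rw [infLap, hgx, hfd, hfdG]
    simp only [hGdef, ContinuousLinearMap.add_apply, ContinuousLinearMap.smul_apply,
      ContinuousLinearMap.coe_id', id_eq, ContinuousLinearMap.smulRight_apply,
      innerSL_apply_apply, inner_add_right, real_inner_smul_left, real_inner_smul_right,
      real_inner_self_eq_norm_sq, norm_smul, Real.norm_eq_abs, mul_pow, sq_abs]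
    have h1 : ‖x‖ ^ (α - 2) = ‖x‖ ^ α / ‖x‖ ^ (2:ℕ) := by
      rw [Real.rpow_sub hr]
      norm_num [Real.rpow_natCast]
    have h2 : ‖x‖ ^ (α - 4) = ‖x‖ ^ α / ‖x‖ ^ (4:ℕ) := by
      rw [Real.rpow_sub hr]
      norm_num [Real.rpow_natCast]
    have h3 : ‖x‖ ^ (3*α - 4) = (‖x‖ ^ α) ^ (3:ℕ) / ‖x‖ ^ (4:ℕ) := by
      rw [Real.rpow_sub hr, ← Real.rpow_natCast (‖x‖ ^ α) 3, ← Real.rpow_mul hr.le]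
      norm_num [Real.rpow_natCast, mul_comm]
    have hA : (0:ℝ) < ‖x‖ ^ α := Real.rpow_pos_of_pos hr α
    rw [h1, h2, h3]
    have h2' : (‖x‖:ℝ) ^ (2:ℕ) ≠ 0 := by positivity
    have h4' : (‖x‖:ℝ) ^ (4:ℕ) ≠ 0 := by positivity
    field_simp
    have e : ‖x‖ ^ 4 * ‖x‖⁻¹ ^ 4 = 1 := by rw [← mul_pow, mul_inv_cancel₀ hr.ne', one_pow]
    linear_combination (α^4*(‖x‖^α)^2 - 2*α^3*(‖x‖^α)^2) * e
  · -- positivity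
    intro hlt
    have hs : ⟪q x, x⟫ ≤ max (⟪q x, x⟫) 0 := le_max_left _ _
    have hneg : α - 1 + ⟪q x, x⟫ < 0 := by linarith
    have hα3 : α ^ (3:ℕ) < 0 := by
      have : Odd 3 := by decide
      exact this.pow_neg hα0
    have hp : (0:ℝ) < ‖x‖ ^ (3*α - 4) := Real.rpow_pos_of_pos hr _
    have := mul_pos_of_neg_of_neg (mul_neg_of_neg_of_pos hα3 hp) hneg
    exact this
end

section
/- Let γ ∈ [0, 2], β ∈ (0, 3 − γ], set α = (4 − γ)/(3 − γ − β) when β < 3 − γ (so α > 1), and let V(x) = |x|^α on ℝ^d. Let q : ℝ^d → ℝ^d. Then for every x ≠ 0, Δ^γ_∞V(x) + (q(x)·∇V(x))|∇V(x)|^{2−γ} = α^{3−γ}|x|^{3α−4−γ(α−1)}((α−1) + q(x)·x) ≤ |x|^{αβ} α^{3−γ}((α−1) + (q(x)·x)₊). Consequently, if c : ℝ^d → ℝ satisfies −c(x) ≥ α^{3−γ}((α−1) + (q(x)·x)₊), then Δ^γ_∞V(x) + (q(x)·∇V(x))|∇V(x)|^{2−γ} + c(x) V(x)^β ≤ 0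 for all x ≠ 0. -/
open scoped RealInnerProductSpace
open Real Filter
open Topology

section aux
variable {E : Type*} [NormedAddCommGroup E] [InnerProductSpace ℝ E]

lemma auxFD {x : E} (hx : x ≠ 0) (a : ℝ) :
    HasFDerivAt (fun y : E => ‖y‖ ^ a) ((a * ‖x‖ ^ (a - 2)) • innerSL ℝ x) x := by
  have hr : (0:ℝ) < ‖x‖ := norm_pos_iff.mpr hx
  have h := ((hasStrictFDerivAt_norm_sq x).hasFDerivAt).rpow_const (p := a/2)
    (Or.inl (by positivity))
  have key : ∀ y : E, (‖y‖ ^ 2 : ℝ) ^ (a/2) = ‖y‖ ^ a := fun y => by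
    rw [← Real.rpow_natCast ‖y‖ 2, ← Real.rpow_mul (norm_nonneg y)]
    congr 1
    push_cast; ring
  have e1 : ((‖x‖ ^ 2 : ℝ)) ^ (a/2 - 1) = ‖x‖ ^ (a - 2) := by
    rw [← Real.rpow_natCast ‖x‖ 2, ← Real.rpow_mul (norm_nonneg x)]
    congr 1
    push_cast; ring
  convert h using 1
  · exact funext fun y => (key y).symm
  · ext y
    simp [e1]
    ring

lemma auxGrad [CompleteSpace E] {x : E} (hx : x ≠ 0) (a : ℝ) :
    HasGradientAt (fun y : E => ‖y‖ ^ a) ((a * ‖x‖ ^ (a - 2)) • x) x := by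
  rw [hasGradientAt_iff_hasFDerivAt]
  convert auxFD hx a using 1
  ext y
  simp [InnerProductSpace.toDual_apply_apply, real_inner_smul_left]
  ext y
  simp [InnerProductSpace.toDual_apply_apply, real_inner_smul_left]

end aux

theorem stmt3 (d : ℕ) (γ β α : ℝ) (hγ : γ ∈ Set.Icc (0 : ℝ) 2) (hβ1 : 0 < β)
    (hβ2 : β < 3 - γ) (hα : α = (4 - γ) / (3 - γ - β))
    (q : EuclideanSpace ℝ (Fin d) → EuclideanSpace ℝ (Fin d))
    (c : EuclideanSpace ℝ (Fin d) → ℝ)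
    (V : EuclideanSpace ℝ (Fin d) → ℝ) (hV : ∀ x, V x = ‖x‖ ^ α) :
    ∀ x : EuclideanSpace ℝ (Fin d), x ≠ 0 →
      (infLapG γ V x + ⟪q x, gradient V x⟫ * ‖gradient V x‖ ^ (2 - γ)
        = α ^ (3 - γ) * ‖x‖ ^ (3 * α - 4 - γ * (α - 1)) * ((α - 1) + ⟪q x, x⟫))
      ∧ (infLapG γ V x + ⟪q x, gradient V x⟫ * ‖gradient V x‖ ^ (2 - γ)
          ≤ ‖x‖ ^ (α * β) * (α ^ (3 - γ) * ((α - 1) + max (⟪q x, x⟫) 0)))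
      ∧ (α ^ (3 - γ) * ((α - 1) + max (⟪q x, x⟫) 0) ≤ -(c x) →
          infLapG γ V x + ⟪q x, gradient V x⟫ * ‖gradient V x‖ ^ (2 - γ)
            + c x * (V x) ^ β ≤ 0) := by
  intro x hx
  have hr : (0:ℝ) < ‖x‖ := norm_pos_iff.mpr hx
  have hden : 0 < 3 - γ - β := by linarith
  have hα1 : 1 < α := by
    rw [hα, lt_div_iff₀ hden]; linarith [hγ.2]
  have hα0 : 0 < α := by linarith
  have hαβ : α * (3 - γ - β) = 4 - γ := by
    rw [hα]; field_simp
  have hexp : 3 * α - 4 - γ * (α - 1) = α * β := by linear_combination hαβ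
  have hVfun : V = fun y => ‖y‖ ^ α := funext hV
  have hgrad : gradient V x = (α * ‖x‖ ^ (α - 2)) • x := by
    rw [hVfun]; exact (auxGrad hx α).gradient
  have hEq : gradient V =ᶠ[𝓝 x] fun y => (α * ‖y‖ ^ (α - 2)) • y := by
    filter_upwards [isOpen_compl_singleton.mem_nhds hx] with y hy
    rw [hVfun]; exact (auxGrad hy α).gradient
  have hc : HasFDerivAt (fun y : EuclideanSpace ℝ (Fin d) => α * ‖y‖ ^ (α - 2))
      (α • (((α - 2) * ‖x‖ ^ (α - 2 - 2)) • innerSL ℝ x)) x :=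
    (auxFD hx (α - 2)).const_mul α
  have hGfd : HasFDerivAt (fun y : EuclideanSpace ℝ (Fin d) => (α * ‖y‖ ^ (α - 2)) • y)
      ((α * ‖x‖ ^ (α - 2)) • ContinuousLinearMap.id ℝ (EuclideanSpace ℝ (Fin d))
        + (α • (((α - 2) * ‖x‖ ^ (α - 2 - 2)) • innerSL ℝ x)).smulRight x) x :=
    hc.smul (hasFDerivAt_id x)
  have p1 : ‖x‖ ^ (α - 2) * ‖x‖ ^ (α - 2) = ‖x‖ ^ (2 * α - 4) := by
    rw [← Real.rpow_add hr]; congr 1; ring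
  have p2 : ‖x‖ ^ (α - 2 - 2) * (‖x‖ ^ (α - 2) * ‖x‖ ^ (2:ℕ)) = ‖x‖ ^ (2 * α - 4) := by
    rw [← Real.rpow_natCast ‖x‖ 2, ← Real.rpow_add hr, ← Real.rpow_add hr]
    congr 1; push_cast; ring
  have happ : fderiv ℝ (gradient V) x (gradient V x)
      = (α * α * (α - 1) * ‖x‖ ^ (2 * α - 4)) • x := by
    rw [hEq.fderiv_eq, hGfd.fderiv, hgrad]
    simp only [ContinuousLinearMap.add_apply, ContinuousLinearMap.coe_smul',
      Pi.smul_apply, ContinuousLinearMap.coe_id', id_eq, ContinuousLinearMap.smulRight_apply,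
      ContinuousLinearMap.smul_apply, innerSL_apply_apply, real_inner_smul_right,
      real_inner_self_eq_norm_sq]
    rw [smul_smul, ← add_smul]
    congr 1
    simp only [smul_eq_mul]
    linear_combination (α * α) * p1 + (α * α * (α - 2)) * p2
  have hLap : infLap V x = α * α * α * (α - 1) * ‖x‖ ^ (3 * α - 4) := by
    rw [infLap, happ, hgrad, real_inner_smul_left, real_inner_smul_right,
      real_inner_self_eq_norm_sq]
    have p3 : ‖x‖ ^ (α - 2) * (‖x‖ ^ (2 * α - 4) * ‖x‖ ^ (2:ℕ)) = ‖x‖ ^ (3 * α - 4) := by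
      rw [← Real.rpow_natCast ‖x‖ 2, ← Real.rpow_add hr, ← Real.rpow_add hr]
      congr 1; push_cast; ring
    linear_combination (α * α * α * (α - 1)) * p3
  have hng : ‖gradient V x‖ = α * ‖x‖ ^ (α - 1) := by
    rw [hgrad, norm_smul, Real.norm_eq_abs, abs_of_pos (by positivity), mul_assoc]
    congr 1
    rw [← Real.rpow_add_one hr.ne' (α - 2)]
    congr 1; ring
  have hip : ⟪q x, gradient V x⟫ = (α * ‖x‖ ^ (α - 2)) * ⟪q x, x⟫ := by
    rw [hgrad, real_inner_smul_right]
  have T1 : (α * ‖x‖ ^ (α - 1)) ^ (-γ) * (α * α * α * (α - 1) * ‖x‖ ^ (3 * α - 4))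
      = α ^ (3 - γ) * ‖x‖ ^ (3 * α - 4 - γ * (α - 1)) * (α - 1) := by
    rw [Real.mul_rpow hα0.le (Real.rpow_nonneg (norm_nonneg x) _),
      ← Real.rpow_mul (norm_nonneg x),
      show (3:ℝ) * α - 4 - γ * (α - 1) = (α - 1) * (-γ) + (3 * α - 4) by ring,
      Real.rpow_add hr,
      show (3:ℝ) - γ = -γ + 1 + 1 + 1 by ring,
      Real.rpow_add hα0, Real.rpow_add hα0, Real.rpow_add hα0, Real.rpow_one]
    ring
  have T2 : (α * ‖x‖ ^ (α - 2)) * (α * ‖x‖ ^ (α - 1)) ^ (2 - γ)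
      = α ^ (3 - γ) * ‖x‖ ^ (3 * α - 4 - γ * (α - 1)) := by
    rw [Real.mul_rpow hα0.le (Real.rpow_nonneg (norm_nonneg x) _),
      ← Real.rpow_mul (norm_nonneg x),
      show (3:ℝ) * α - 4 - γ * (α - 1) = (α - 2) + (α - 1) * (2 - γ) by ring,
      Real.rpow_add hr,
      show (3:ℝ) - γ = 1 + (2 - γ) by ring,
      Real.rpow_add hα0, Real.rpow_one]
    ring
  have goal1 : infLapG γ V x + ⟪q x, gradient V x⟫ * ‖gradient V x‖ ^ (2 - γ)
      = α ^ (3 - γ) * ‖x‖ ^ (3 * α - 4 - γ * (α - 1)) * ((α - 1) + ⟪q x, x⟫) := by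
    rw [infLapG, hLap, hng, hip]
    linear_combination T1 + ⟪q x, x⟫ * T2
  have hpos1 : (0:ℝ) < α ^ (3 - γ) := Real.rpow_pos_of_pos hα0 _
  have hpos2 : (0:ℝ) < ‖x‖ ^ (α * β) := Real.rpow_pos_of_pos hr _
  have goal2 : infLapG γ V x + ⟪q x, gradient V x⟫ * ‖gradient V x‖ ^ (2 - γ)
      ≤ ‖x‖ ^ (α * β) * (α ^ (3 - γ) * ((α - 1) + max (⟪q x, x⟫) 0)) := by
    rw [goal1, hexp]
    have hmm := mul_nonneg (mul_nonneg hpos1.le hpos2.le)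
      (sub_nonneg.mpr (le_max_left (⟪q x, x⟫) 0))
    nlinarith [hmm]
  refine ⟨goal1, goal2, fun hc3 => ?_⟩
  have hVβ : (V x) ^ β = ‖x‖ ^ (α * β) := by
    rw [hV x]; exact (Real.rpow_mul (norm_nonneg x) α β).symm
  have hdist : ‖x‖ ^ (α * β) * (α ^ (3 - γ) * ((α - 1) + max (⟪q x, x⟫) 0))
      + c x * ‖x‖ ^ (α * β)
      = ‖x‖ ^ (α * β) * (α ^ (3 - γ) * ((α - 1) + max (⟪q x, x⟫) 0) + c x) := by ring
  have hfin : ‖x‖ ^ (α * β) * (α ^ (3 - γ) * ((α - 1) + max (⟪q x, x⟫) 0) + c x) ≤ 0 :=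
    mul_nonpos_of_nonneg_of_nonpos hpos2.le (by linarith)
  rw [hVβ]
  linarith [goal2, hdist, hfin]
end

section
/- Let r > 0, and let q, c : ℝ^d → ℝ^d, ℝ be bounded on the ball B_{2r}. Define, for α > 0, u(x) = e^{−α|x|} − e^{−αr}. Then for all x with r/2 ≤ |x| ≤ r and x ≠ 0, and any γ ∈ [0,2]: Δ^γ_∞u(x) + (q(x)·∇u(x))|∇u(x)|^{2−γ} + c(x)u(x)^{3−γ} ≥ e^{−α(3−γ)|x|}[α^{4−γ} − ‖q‖_∞ α^{3−γ} − ‖c‖_∞ (1 − e^{−α(r−|x|)})^{3−γ}]. In particular, this is strictly positive for all sufficiently large α (depending only on ‖q‖_∞, ‖c‖_∞, γ). -/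
open scoped RealInnerProductSpace
open Real Filter
open Topology


variable {d : ℕ}
local notation "E" => EuclideanSpace ℝ (Fin d)

lemma myNormDeriv (x : E) (hx : x ≠ 0) :
    HasFDerivAt (fun y : E => ‖y‖) (‖x‖⁻¹ • innerSL ℝ x) x := by
  have hn : (0:ℝ) < ‖x‖ := norm_pos_iff.mpr hx
  have h1 : HasFDerivAt (fun y : E => ‖y‖ ^ 2) (2 • innerSL ℝ x) x :=
    (hasStrictFDerivAt_norm_sq x).hasFDerivAt
  have h2 : HasDerivAt Real.sqrt (1 / (2 * Real.sqrt (‖x‖ ^ 2))) (‖x‖ ^ 2) :=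
    Real.hasDerivAt_sqrt (by positivity)
  have h3 := h2.comp_hasFDerivAt x h1
  have key : ∀ y : E, Real.sqrt (‖y‖ ^ 2) = ‖y‖ := fun y => Real.sqrt_sq (norm_nonneg y)
  have h4 : HasFDerivAt (fun y : E => ‖y‖)
      ((1 / (2 * Real.sqrt (‖x‖ ^ 2))) • (2 • innerSL ℝ x)) x := by
    rw [show (fun y : E => ‖y‖) = Real.sqrt ∘ fun y : E => ‖y‖ ^ 2 from by
      funext y; simp [Function.comp, key]]
    exact h3
  refine h4.congr_fderiv ?_
  rw [key x]
  ext v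
  simp only [ContinuousLinearMap.smul_apply, smul_eq_mul, two_smul,
    ContinuousLinearMap.add_apply]
  field_simp
  ring

lemma myGrad (α r : ℝ) (x : E) (hx : x ≠ 0) :
    HasGradientAt (fun y : E => Real.exp (-α * ‖y‖) - Real.exp (-α * r))
      ((-(α * Real.exp (-α * ‖x‖)) / ‖x‖) • x) x := by
  have hn : (0:ℝ) < ‖x‖ := norm_pos_iff.mpr hx
  have hd : HasDerivAt (fun t : ℝ => Real.exp (-α * t) - Real.exp (-α * r))
      (-(α * Real.exp (-α * ‖x‖))) ‖x‖ := by
    have := (((hasDerivAt_id (‖x‖)).const_mul (-α)).exp).sub_const (Real.exp (-α * r))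
    exact this.congr_deriv (by simp only [id_eq, mul_one]; ring)
  have h := hd.comp_hasFDerivAt x (myNormDeriv x hx)
  rw [hasGradientAt_iff_hasFDerivAt]
  refine h.congr_fderiv ?_
  ext v
  simp only [InnerProductSpace.toDual_apply_apply, ContinuousLinearMap.smul_apply,
    innerSL_apply_apply, smul_eq_mul, real_inner_smul_left]
  ring

lemma myCalc (α r : ℝ) (x : E) (hx : x ≠ 0) :
    infLap (fun y : E => Real.exp (-α * ‖y‖) - Real.exp (-α * r)) x
      = α ^ 4 * Real.exp (-α * ‖x‖) ^ 3 := by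
  have hn : (0:ℝ) < ‖x‖ := norm_pos_iff.mpr hx
  have hEv : gradient (fun y : E => Real.exp (-α * ‖y‖) - Real.exp (-α * r))
      =ᶠ[𝓝 x] fun y : E => (-(α * Real.exp (-α * ‖y‖)) * ‖y‖⁻¹) • y := by
    filter_upwards [IsOpen.mem_nhds isOpen_compl_singleton hx] with y hy
    rw [(myGrad α r y hy).gradient, div_eq_mul_inv]
  have hnum : HasDerivAt (fun t : ℝ => -(α * Real.exp (-α * t)))
      (α ^ 2 * Real.exp (-α * ‖x‖)) ‖x‖ := by
    have h1 : HasDerivAt (fun t : ℝ => -α * t) (-α) ‖x‖ := by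
      simpa using (hasDerivAt_id ‖x‖).const_mul (-α)
    have h2 := (h1.exp).const_mul (-α)
    rw [show (fun t : ℝ => -(α * Real.exp (-α * t))) = fun y => -α * Real.exp (-α * y) from by
      funext t; ring]
    exact h2.congr_deriv (by ring)
  have hinv : HasDerivAt (fun t : ℝ => t⁻¹) (-(‖x‖ ^ 2)⁻¹) ‖x‖ := hasDerivAt_inv hn.ne'
  have ht := hnum.mul hinv
  have hs := ht.comp_hasFDerivAt x (myNormDeriv x hx)
  have hG : HasFDerivAt (fun y : E => (-(α * Real.exp (-α * ‖y‖)) * ‖y‖⁻¹) • y) _ x :=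
    hs.smul (hasFDerivAt_id x)
  have hg1 : gradient (fun y : E => Real.exp (-α * ‖y‖) - Real.exp (-α * r)) x
      = (-(α * Real.exp (-α * ‖x‖)) / ‖x‖) • x := (myGrad α r x hx).gradient
  show ⟪_, _⟫ = _
  rw [hg1, hEv.fderiv_eq, hG.fderiv]
  simp only [ContinuousLinearMap.add_apply, ContinuousLinearMap.smul_apply,
    ContinuousLinearMap.coe_id', id_eq, ContinuousLinearMap.smulRight_apply,
    innerSL_apply_apply, smul_eq_mul, inner_add_right, real_inner_smul_right,
    real_inner_smul_left, real_inner_self_eq_norm_sq, Function.comp,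
    norm_smul, Real.norm_eq_abs, mul_pow, sq_abs, Pi.mul_apply]
  field_simp
  ring

theorem stmt7 (d : ℕ) (r γ Q C : ℝ) (hr : 0 < r) (hγ : γ ∈ Set.Icc (0 : ℝ) 2)
    (q : EuclideanSpace ℝ (Fin d) → EuclideanSpace ℝ (Fin d))
    (c : EuclideanSpace ℝ (Fin d) → ℝ)
    (hQ : ∀ x : EuclideanSpace ℝ (Fin d), ‖x‖ ≤ 2 * r → ‖q x‖ ≤ Q)
    (hC : ∀ x : EuclideanSpace ℝ (Fin d), ‖x‖ ≤ 2 * r → |c x| ≤ C)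
    (hQ0 : 0 ≤ Q) (hC0 : 0 ≤ C) :
    (∀ α : ℝ, 0 < α → ∀ x : EuclideanSpace ℝ (Fin d),
        r / 2 ≤ ‖x‖ → ‖x‖ ≤ r → x ≠ 0 →
      infLapG γ (fun y => Real.exp (-α * ‖y‖) - Real.exp (-α * r)) x
        + ⟪q x, gradient (fun y => Real.exp (-α * ‖y‖) - Real.exp (-α * r)) x⟫
          * ‖gradient (fun y => Real.exp (-α * ‖y‖) - Real.exp (-α * r)) x‖ ^ (2 - γ)
        + c x * (Real.exp (-α * ‖x‖) - Real.exp (-α * r)) ^ (3 - γ)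
      ≥ Real.exp (-α * (3 - γ) * ‖x‖) *
          (α ^ (4 - γ) - Q * α ^ (3 - γ)
            - C * (1 - Real.exp (-α * (r - ‖x‖))) ^ (3 - γ)))
    ∧ ∃ α₀ : ℝ, 0 < α₀ ∧ ∀ α : ℝ, α₀ ≤ α → ∀ x : EuclideanSpace ℝ (Fin d),
        r / 2 ≤ ‖x‖ → ‖x‖ ≤ r →
        0 < Real.exp (-α * (3 - γ) * ‖x‖) *
            (α ^ (4 - γ) - Q * α ^ (3 - γ)
              - C * (1 - Real.exp (-α * (r - ‖x‖))) ^ (3 - γ)) := by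
  obtain ⟨hγ0, hγ2⟩ := hγ
  constructor
  · intro α hα x hr2 hxr hx0
    have hn : (0:ℝ) < ‖x‖ := norm_pos_iff.mpr hx0
    have hxr2 : ‖x‖ ≤ 2 * r := by linarith
    have he : (0:ℝ) < Real.exp (-α * ‖x‖) := Real.exp_pos _
    have hg1 := (myGrad α r x hx0).gradient
    have hnormg : ‖gradient (fun y : EuclideanSpace ℝ (Fin d) => Real.exp (-α * ‖y‖) - Real.exp (-α * r)) x‖
        = α * Real.exp (-α * ‖x‖) := by
      rw [hg1, norm_smul, Real.norm_eq_abs, abs_div, abs_neg,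
        abs_of_pos (mul_pos hα he), abs_of_pos hn]
      field_simp
    have hIL := myCalc α r x hx0
    have hILG : infLapG γ (fun y : EuclideanSpace ℝ (Fin d) => Real.exp (-α * ‖y‖) - Real.exp (-α * r)) x
        = α ^ ((4:ℝ) - γ) * Real.exp (-α * ‖x‖) ^ ((3:ℝ) - γ) := by
      unfold infLapG
      rw [hIL, hnormg, Real.mul_rpow hα.le he.le, Real.rpow_sub hα, Real.rpow_sub he,
        Real.rpow_neg hα.le, Real.rpow_neg he.le]
      rw [show ((4:ℝ)) = ((4:ℕ):ℝ) by norm_num, show ((3:ℝ)) = ((3:ℕ):ℝ) by norm_num,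
        Real.rpow_natCast, Real.rpow_natCast]
      have h1 : α ^ γ ≠ 0 := (Real.rpow_pos_of_pos hα γ).ne'
      have h2 : Real.exp (-α * ‖x‖) ^ γ ≠ 0 := (Real.rpow_pos_of_pos he γ).ne'
      field_simp
    -- q term
    have hq : ‖q x‖ ≤ Q := hQ x hxr2
    have habs := abs_real_inner_le_norm (q x)
      (gradient (fun y : EuclideanSpace ℝ (Fin d) => Real.exp (-α * ‖y‖) - Real.exp (-α * r)) x)
    rw [hnormg] at habs
    have hmul : ‖q x‖ * (α * Real.exp (-α * ‖x‖)) ≤ Q * (α * Real.exp (-α * ‖x‖)) :=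
      mul_le_mul_of_nonneg_right hq (mul_pos hα he).le
    have hinner : -(Q * (α * Real.exp (-α * ‖x‖)))
        ≤ ⟪q x, gradient (fun y : EuclideanSpace ℝ (Fin d) => Real.exp (-α * ‖y‖) - Real.exp (-α * r)) x⟫ := by
      have := neg_abs_le
        (⟪q x, gradient (fun y : EuclideanSpace ℝ (Fin d) => Real.exp (-α * ‖y‖) - Real.exp (-α * r)) x⟫ : ℝ)
      linarith
    have hpw : (0:ℝ) ≤ (α * Real.exp (-α * ‖x‖)) ^ ((2:ℝ) - γ) := Real.rpow_nonneg (mul_pos hα he).le _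
    have hB : -(Q * α ^ ((3:ℝ) - γ) * Real.exp (-α * ‖x‖) ^ ((3:ℝ) - γ))
        ≤ ⟪q x, gradient (fun y : EuclideanSpace ℝ (Fin d) => Real.exp (-α * ‖y‖) - Real.exp (-α * r)) x⟫
          * ‖gradient (fun y : EuclideanSpace ℝ (Fin d) => Real.exp (-α * ‖y‖) - Real.exp (-α * r)) x‖ ^ ((2:ℝ) - γ) := by
      rw [hnormg]
      have step := mul_le_mul_of_nonneg_right hinner hpw
      have hid : -(Q * α ^ ((3:ℝ) - γ) * Real.exp (-α * ‖x‖) ^ ((3:ℝ) - γ))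
          = -(Q * (α * Real.exp (-α * ‖x‖))) * (α * Real.exp (-α * ‖x‖)) ^ ((2:ℝ) - γ) := by
        rw [Real.mul_rpow hα.le he.le, show (3:ℝ) - γ = 1 + ((2:ℝ) - γ) by ring,
          Real.rpow_add hα, Real.rpow_add he, Real.rpow_one, Real.rpow_one]
        ring
      rw [hid]
      exact step
    -- c term
    have hu0 : (0:ℝ) ≤ Real.exp (-α * ‖x‖) - Real.exp (-α * r) := by
      have h1 : -α * r ≤ -α * ‖x‖ := by nlinarith
      have := Real.exp_le_exp.mpr h1
      linarith
    have hE' : Real.exp (-α * (r - ‖x‖)) ≤ 1 := Real.exp_le_one_iff.mpr (by nlinarith)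
    have h1E : (0:ℝ) ≤ 1 - Real.exp (-α * (r - ‖x‖)) := by linarith
    have harg : -α * r = -α * ‖x‖ + -α * (r - ‖x‖) := by ring
    have hufact : Real.exp (-α * ‖x‖) - Real.exp (-α * r)
        = Real.exp (-α * ‖x‖) * (1 - Real.exp (-α * (r - ‖x‖))) := by
      rw [mul_sub, mul_one, ← Real.exp_add, harg]
    have hcx : -C ≤ c x := (abs_le.mp (hC x hxr2)).1
    have hup : (0:ℝ) ≤ (Real.exp (-α * ‖x‖) - Real.exp (-α * r)) ^ ((3:ℝ) - γ) :=
      Real.rpow_nonneg hu0 _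
    have hid2 : (Real.exp (-α * ‖x‖) - Real.exp (-α * r)) ^ ((3:ℝ) - γ)
        = Real.exp (-α * ‖x‖) ^ ((3:ℝ) - γ)
          * (1 - Real.exp (-α * (r - ‖x‖))) ^ ((3:ℝ) - γ) := by
      rw [hufact, Real.mul_rpow he.le h1E]
    have hC3 : -(C * Real.exp (-α * ‖x‖) ^ ((3:ℝ) - γ)
          * (1 - Real.exp (-α * (r - ‖x‖))) ^ ((3:ℝ) - γ))
        ≤ c x * (Real.exp (-α * ‖x‖) - Real.exp (-α * r)) ^ ((3:ℝ) - γ) := by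
      have step := mul_le_mul_of_nonneg_right hcx hup
      rw [hid2] at step ⊢
      linarith
    have hER : Real.exp (-α * (3 - γ) * ‖x‖) = Real.exp (-α * ‖x‖) ^ ((3:ℝ) - γ) := by
      rw [← Real.exp_mul]
      congr 1
      ring
    have expand : Real.exp (-α * (3 - γ) * ‖x‖)
          * (α ^ ((4:ℝ) - γ) - Q * α ^ ((3:ℝ) - γ)
            - C * (1 - Real.exp (-α * (r - ‖x‖))) ^ ((3:ℝ) - γ))
        = α ^ ((4:ℝ) - γ) * Real.exp (-α * ‖x‖) ^ ((3:ℝ) - γ)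
          - Q * α ^ ((3:ℝ) - γ) * Real.exp (-α * ‖x‖) ^ ((3:ℝ) - γ)
          - C * Real.exp (-α * ‖x‖) ^ ((3:ℝ) - γ)
            * (1 - Real.exp (-α * (r - ‖x‖))) ^ ((3:ℝ) - γ) := by
      rw [hER]; ring
    rw [ge_iff_le, expand, hILG]
    linarith
  · refine ⟨max 1 (Q + C + 1), lt_max_iff.mpr (Or.inl one_pos), ?_⟩
    intro α hαge x hr2 hxr
    have hα1 : (1:ℝ) ≤ α := le_trans (le_max_left _ _) hαge
    have hαQ : Q + C + 1 ≤ α := le_trans (le_max_right _ _) hαge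
    have hα : (0:ℝ) < α := by linarith
    apply mul_pos (Real.exp_pos _)
    have h3γ : (0:ℝ) ≤ 3 - γ := by linarith
    have hE' : Real.exp (-α * (r - ‖x‖)) ≤ 1 := Real.exp_le_one_iff.mpr (by nlinarith)
    have h1E : (0:ℝ) ≤ 1 - Real.exp (-α * (r - ‖x‖)) := by linarith
    have hEpos := Real.exp_pos (-α * (r - ‖x‖))
    have hpow1 : (1 - Real.exp (-α * (r - ‖x‖))) ^ ((3:ℝ) - γ) ≤ 1 :=
      Real.rpow_le_one h1E (by linarith) h3γ
    have hzn : (0:ℝ) ≤ (1 - Real.exp (-α * (r - ‖x‖))) ^ ((3:ℝ) - γ) :=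
      Real.rpow_nonneg h1E _
    have hp : (1:ℝ) ≤ α ^ ((3:ℝ) - γ) := Real.one_le_rpow hα1 h3γ
    have h4 : α ^ ((4:ℝ) - γ) = α ^ ((3:ℝ) - γ) * α := by
      rw [show (4:ℝ) - γ = ((3:ℝ) - γ) + 1 by ring, Real.rpow_add hα, Real.rpow_one]
    have hCz : C * (1 - Real.exp (-α * (r - ‖x‖))) ^ ((3:ℝ) - γ) ≤ C := by nlinarith
    have k1 : α ^ ((3:ℝ) - γ) * (C + 1) ≤ α ^ ((3:ℝ) - γ) * (α - Q) :=
      mul_le_mul_of_nonneg_left (by linarith) (Real.rpow_pos_of_pos hα _).le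
    have k2 : C + 1 ≤ α ^ ((3:ℝ) - γ) * (C + 1) := by nlinarith
    rw [h4]
    nlinarith
end
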